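/- At the critical fugacity z_n = 1 (i.e. α arbitrary with β > 1/2, in particular z_n ≡ 1), the mean walk length of the self-avoiding walk on K_n satisfies E_{n,1}(L_n) ~ √(2/π)·√n as n → ∞. -/

import Mathlib

open Filter Finset Real Asymptotics

/-- Number of `k`-step SAWs weight: `(z/n)^k` times the number of walks. -/
noncomputable def sawWeight (n : ℕ) (z : ℝ) (k : ℕ) : ℝ :=
  (z / n) ^ k * ((n - 1).descFactorial k)

/-- Partition function of the variable-length SAW model on `K_n`. -/
noncomputable def sawZ (n : ℕ) (z : ℝ) : ℝ := ∑ k ∈ Finset.range n, sawWeight n z k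

/-- Probability that the walk length equals `k`. -/
noncomputable def sawProb (n : ℕ) (z : ℝ) (k : ℕ) : ℝ := sawWeight n z k / sawZ n z

/-- Mean walk length. -/
noncomputable def sawMean (n : ℕ) (z : ℝ) : ℝ := ∑ k ∈ Finset.range n, (k : ℝ) * sawProb n z k

/-- Variance of the walk length. -/
noncomputable def sawVar (n : ℕ) (z : ℝ) : ℝ :=
  (∑ k ∈ Finset.range n, (k : ℝ) ^ 2 * sawProb n z k) - (sawMean n z) ^ 2

/-- Tail distribution `P(L_n > x)` for real `x`. -/
noncomputable def sawTail (n : ℕ) (z : ℝ) (x : ℝ) : ℝ :=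
  ∑ k ∈ Finset.range n, if x < (k : ℝ) then sawProb n z k else 0

/-- Regularised incomplete gamma function at integer first argument,
    `Q(n, ν) = e^{-ν} ∑_{j<n} ν^j/j!`. -/
noncomputable def Qreg (n : ℕ) (ν : ℝ) : ℝ :=
  Real.exp (-ν) * ∑ j ∈ Finset.range n, ν ^ j / (Nat.factorial j)

/-- `H_n(ν) = Γ(n) Q(n,ν) / (ν^n e^{-ν})`. -/
noncomputable def Hfun (n : ℕ) (ν : ℝ) : ℝ :=
  Real.Gamma n * Qreg n ν / (ν ^ n * Real.exp (-ν))

/-- Standard normal density. -/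
noncomputable def normpdf (x : ℝ) : ℝ := Real.exp (-x ^ 2 / 2) / Real.sqrt (2 * Real.pi)

/-- Standard normal tail distribution `Φ̄`. -/
noncomputable def normTail (x : ℝ) : ℝ := ∫ t in Set.Ioi x, normpdf t

/-- `η(λ) = sgn(λ-1) √(2(λ-1-log λ))`. -/
noncomputable def etaF (l : ℝ) : ℝ := Real.sign (l - 1) * Real.sqrt (2 * (l - 1 - Real.log l))

/-- `Γ*(n) = √(n/(2π)) e^n n^{-n} Γ(n)`. -/
noncomputable def gammaStar (n : ℕ) : ℝ :=
  Real.sqrt (n / (2 * Real.pi)) * Real.exp n * ((n : ℝ) ^ n)⁻¹ * Real.Gamma n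

/-- The operator `(ν d/dν)^l`. -/
noncomputable def thetaOp : ℕ → (ℝ → ℝ) → (ℝ → ℝ)
  | 0, f => f
  | (l + 1), f => fun ν => ν * deriv (thetaOp l f) ν

set_option maxHeartbeats 1000000

section SawProof
open MeasureTheory

lemma weight_zero (n : ℕ) : sawWeight n 1 0 = 1 := by simp [sawWeight]

lemma weight_nonneg (n : ℕ) (k : ℕ) : 0 ≤ sawWeight n 1 k := by
  unfold sawWeight; positivity

lemma weight_top (n : ℕ) (hn : 1 ≤ n) : sawWeight n 1 n = 0 := by
  unfold sawWeight
  rw [Nat.descFactorial_eq_zero_iff_lt.2 (by omega)]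
  simp

lemma step_id (n k : ℕ) (hn : 1 ≤ n) (hk : k < n) :
    ((k : ℝ) + 1) * sawWeight n 1 k = n * (sawWeight n 1 k - sawWeight n 1 (k + 1)) := by
  unfold sawWeight
  rw [Nat.descFactorial_succ]
  have h1 : ((n - 1 - k : ℕ) : ℝ) = (n : ℝ) - 1 - k := by
    have : (1:ℕ) + k ≤ n := by omega
    push_cast [Nat.sub_sub, Nat.cast_sub this]; ring
  have hn0 : (n : ℝ) ≠ 0 := by positivity
  push_cast [h1]
  field_simp
  rw [pow_succ]
  linear_combination (((n - 1).descFactorial k : ℝ) * (1 / (n:ℝ)) ^ k * ((n:ℝ) - 1 - k)) * (mul_one_div_cancel hn0)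

lemma sum_succ_weight (n : ℕ) (hn : 1 ≤ n) :
    ∑ k ∈ Finset.range n, ((k : ℝ) + 1) * sawWeight n 1 k = n := by
  rw [Finset.sum_congr rfl (fun k hk => step_id n k hn (Finset.mem_range.1 hk)),
    ← Finset.mul_sum, sum_range_sub' (fun k => sawWeight n 1 k) n, weight_zero,
    weight_top n hn]
  simp

lemma Z_ge_one (n : ℕ) (hn : 1 ≤ n) : 1 ≤ sawZ n 1 := by
  have := Finset.single_le_sum (f := fun k => sawWeight n 1 k)
    (fun k _ => weight_nonneg n k) (Finset.mem_range.2 (by omega : 0 < n))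
  rwa [weight_zero] at this

lemma mean_eq (n : ℕ) (hn : 1 ≤ n) : sawMean n 1 = n / sawZ n 1 - 1 := by
  have hZ : sawZ n 1 ≠ 0 := by linarith [Z_ge_one n hn]
  have key : ∑ k ∈ Finset.range n, (k : ℝ) * sawWeight n 1 k = n - sawZ n 1 := by
    have h := sum_succ_weight n hn
    rw [show (fun (k:ℕ) => ((k:ℝ)+1) * sawWeight n 1 k) = fun (k:ℕ) => (k:ℝ) * sawWeight n 1 k + sawWeight n 1 k from funext fun k => by ring] at h
    rw [Finset.sum_add_distrib] at h
    have : sawZ n 1 = ∑ k ∈ Finset.range n, sawWeight n 1 k := rfl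
    linarith
  unfold sawMean sawProb
  rw [Finset.sum_congr rfl (fun k _ => (mul_div_assoc _ _ _).symm), ← Finset.sum_div, key]
  field_simp


lemma weight_prod (n k : ℕ) :
    sawWeight n 1 k = ∏ i ∈ Finset.range k, (((n - 1 - i : ℕ) : ℝ) / n) := by
  unfold sawWeight
  rw [Nat.descFactorial_eq_prod_range, Finset.prod_div_distrib, Finset.prod_const,
    Nat.cast_prod]
  rw [Finset.card_range, one_div, inv_pow]
  ring

-- per-factor upper bound
lemma factor_le (n i : ℕ) (hn : 1 ≤ n) :
    ((n - 1 - i : ℕ) : ℝ) / n ≤ Real.exp (-(((i:ℝ) + 1) / n)) := by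
  have hn0 : (0:ℝ) < n := by positivity
  rcases le_or_gt (i + 1) n with h | h
  · have h1 : ((n - 1 - i : ℕ) : ℝ) = (n : ℝ) - 1 - i := by
      push_cast [Nat.sub_sub, Nat.cast_sub (by omega : 1 + i ≤ n)]; ring
    rw [h1]
    have := Real.add_one_le_exp (-(((i:ℝ) + 1) / n))
    have h2 : ((n:ℝ) - 1 - i)/n = -(((i:ℝ)+1)/n) + 1 := by field_simp; ring
    rw [h2]; exact this
  · have : n - 1 - i = 0 := by omega
    rw [this]
    simp only [Nat.cast_zero, zero_div]
    positivity

lemma gauss_sum (k : ℕ) : ∑ i ∈ Finset.range k, ((i:ℝ) + 1) = k * (k + 1) / 2 := by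
  induction k with
  | zero => simp
  | succ m ih => rw [Finset.sum_range_succ, ih]; push_cast; ring

lemma weight_le (n k : ℕ) (hn : 1 ≤ n) :
    sawWeight n 1 k ≤ Real.exp (-((k:ℝ)^2 / (2 * n))) := by
  have hn0 : (0:ℝ) < n := by positivity
  calc sawWeight n 1 k = ∏ i ∈ Finset.range k, (((n - 1 - i : ℕ) : ℝ) / n) :=
        weight_prod n k
    _ ≤ ∏ i ∈ Finset.range k, Real.exp (-(((i:ℝ) + 1) / n)) := by
        apply Finset.prod_le_prod (fun i _ => by positivity)
          (fun i _ => factor_le n i hn)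
    _ = Real.exp (∑ i ∈ Finset.range k, -(((i:ℝ) + 1) / n)) := (Real.exp_sum _ _).symm
    _ ≤ Real.exp (-((k:ℝ)^2 / (2 * n))) := by
        apply Real.exp_le_exp.2
        have : ∑ i ∈ Finset.range k, -(((i:ℝ) + 1) / n)
            = -((∑ i ∈ Finset.range k, ((i:ℝ) + 1)) / n) := by
          simp only [← neg_div]
          rw [← Finset.sum_div, Finset.sum_neg_distrib, neg_div]
        rw [this, gauss_sum, neg_le_neg_iff, div_le_div_iff₀ (by positivity) (by positivity)]
        have : (0:ℝ) ≤ k := Nat.cast_nonneg k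
        nlinarith


lemma exp_lb {x : ℝ} (h0 : 0 ≤ x) (h4 : x ≤ 1/4) : Real.exp (-(x + x^2)) ≤ 1 - x := by
  have key : 1 ≤ (1 - x) * Real.exp (x + x^2) := by
    have e2 : 1 + (x + x^2)/2 ≤ Real.exp ((x + x^2)/2) := by
      linarith [Real.add_one_le_exp ((x + x^2)/2)]
    have esq : Real.exp (x + x^2) = Real.exp ((x + x^2)/2) * Real.exp ((x + x^2)/2) := by
      rw [← Real.exp_add]; ring_nf
    have hpos : (0:ℝ) ≤ 1 + (x + x^2)/2 := by nlinarith
    have h1 : (1 + (x + x^2)/2) * (1 + (x + x^2)/2) ≤ Real.exp (x + x^2) := by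
      rw [esq]; exact mul_le_mul e2 e2 hpos (Real.exp_pos _).le
    have hpoly : 1 ≤ (1 - x) * ((1 + (x + x^2)/2) * (1 + (x + x^2)/2)) := by nlinarith [sq_nonneg x, sq_nonneg (x*x)]
    exact hpoly.trans (mul_le_mul_of_nonneg_left h1 (by linarith))
  have hprod : Real.exp (-(x + x^2)) * Real.exp (x + x^2) = 1 := by
    rw [← Real.exp_add, neg_add_cancel, Real.exp_zero]
  nlinarith [mul_le_mul_of_nonneg_left key (Real.exp_pos (-(x+x^2))).le, hprod,
    Real.exp_pos (-(x+x^2))]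

lemma weight_ge (n k : ℕ) (hn : 1 ≤ n) (hk : (k:ℝ) ≤ (n:ℝ)/4) :
    Real.exp (-((k:ℝ)^2 / (2*n)) - ((k:ℝ)/(2*n) + (k:ℝ)^3/(n:ℝ)^2)) ≤ sawWeight n 1 k := by
  have hn0 : (0:ℝ) < n := by positivity
  have hfac : ∀ i ∈ Finset.range k,
      Real.exp (-((((i:ℝ)+1)/n) + (((i:ℝ)+1)/n)^2)) ≤ ((n - 1 - i : ℕ) : ℝ) / n := by
    intro i hi
    have hik : (i:ℝ) + 1 ≤ k := by
      have := Finset.mem_range.1 hi; push_cast; exact_mod_cast Nat.succ_le_of_lt this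
    have hx0 : 0 ≤ ((i:ℝ)+1)/n := by positivity
    have hx4 : ((i:ℝ)+1)/n ≤ 1/4 := by
      rw [div_le_iff₀ hn0]; nlinarith
    have h1 : ((n - 1 - i : ℕ) : ℝ) = (n : ℝ) - 1 - i := by
      have hin : (1:ℕ) + i ≤ n := by
        have : ((i:ℝ)+1) ≤ (n:ℝ)/4 := hik.trans hk
        have h2 : ((1+i:ℕ):ℝ) ≤ (n:ℝ) := by push_cast; linarith
        exact_mod_cast h2
      push_cast [Nat.sub_sub, Nat.cast_sub hin]; ring
    rw [h1]
    have := exp_lb hx0 hx4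
    have heq : 1 - ((i:ℝ)+1)/n = ((n:ℝ) - 1 - i)/n := by field_simp; ring
    linarith [heq ▸ this]
  calc Real.exp (-((k:ℝ)^2 / (2*n)) - ((k:ℝ)/(2*n) + (k:ℝ)^3/(n:ℝ)^2))
      ≤ Real.exp (∑ i ∈ Finset.range k, -((((i:ℝ)+1)/n) + (((i:ℝ)+1)/n)^2)) := by
        apply Real.exp_le_exp.2
        have hs1 : ∑ i ∈ Finset.range k, (((i:ℝ)+1)/n) = (k*(k+1)/2)/n := by
          rw [← Finset.sum_div, gauss_sum]
        have hs2 : ∑ i ∈ Finset.range k, (((i:ℝ)+1)/n)^2 ≤ (k:ℝ)^3/(n:ℝ)^2 := by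
          have : ∀ i ∈ Finset.range k, (((i:ℝ)+1)/n)^2 ≤ (k:ℝ)^2/(n:ℝ)^2 := by
            intro i hi
            have hik : (i:ℝ) + 1 ≤ k := by
              have := Finset.mem_range.1 hi; exact_mod_cast Nat.succ_le_of_lt this
            have : (0:ℝ) ≤ (i:ℝ)+1 := by positivity
            rw [div_pow, div_le_div_iff₀ (by positivity) (by positivity)]
            have h2 : ((i:ℝ)+1)^2 ≤ (k:ℝ)^2 := by nlinarith
            exact mul_le_mul_of_nonneg_right h2 (by positivity)
          calc ∑ i ∈ Finset.range k, (((i:ℝ)+1)/n)^2 ≤ ∑ _i ∈ Finset.range k, (k:ℝ)^2/(n:ℝ)^2 :=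
                Finset.sum_le_sum this
            _ = k * ((k:ℝ)^2/(n:ℝ)^2) := by rw [Finset.sum_const, Finset.card_range]; simp
            _ = (k:ℝ)^3/(n:ℝ)^2 := by ring
        have hsplit : ∑ i ∈ Finset.range k, -((((i:ℝ)+1)/n) + (((i:ℝ)+1)/n)^2)
            = -(∑ i ∈ Finset.range k, (((i:ℝ)+1)/n)) - ∑ i ∈ Finset.range k, (((i:ℝ)+1)/n)^2 := by
          rw [← Finset.sum_neg_distrib]
          rw [← Finset.sum_sub_distrib]
          congr 1; funext i; ring
        rw [hsplit, hs1]
        have : (k:ℝ)*(k+1)/2/n = (k:ℝ)^2/(2*n) + k/(2*n) := by field_simp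
        rw [this]
        linarith
    _ = ∏ i ∈ Finset.range k, Real.exp (-((((i:ℝ)+1)/n) + (((i:ℝ)+1)/n)^2)) := Real.exp_sum _ _
    _ ≤ ∏ i ∈ Finset.range k, (((n - 1 - i : ℕ) : ℝ) / n) :=
        Finset.prod_le_prod (fun i _ => (Real.exp_pos _).le) hfac
    _ = sawWeight n 1 k := (weight_prod n k).symm


lemma gauss_anti {b : ℝ} (hb : 0 < b) {c : ℝ} :
    AntitoneOn (fun x : ℝ => Real.exp (-b * x^2)) (Set.Icc 0 c) := by
  intro x hx y hy hxy
  refine Real.exp_le_exp.2 ?_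
  have hsq : x^2 ≤ y^2 := by nlinarith [hx.1]
  nlinarith [mul_le_mul_of_nonneg_left hsq hb.le]

lemma gauss_int_le {b : ℝ} (hb : 0 < b) {m : ℝ} (hm : 0 ≤ m) :
    ∫ x in (0:ℝ)..m, Real.exp (-b * x^2) ≤ ∫ x in Set.Ioi (0:ℝ), Real.exp (-b * x^2) := by
  rw [intervalIntegral.integral_of_le hm]
  apply setIntegral_mono_set ((integrable_exp_neg_mul_sq hb).integrableOn)
  · exact Filter.Eventually.of_forall (fun x => (Real.exp_pos _).le)
  · exact (Set.Ioc_subset_Ioi_self).eventuallyLE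

lemma gauss_halfline (n : ℕ) (hn : 1 ≤ n) :
    ∫ x in Set.Ioi (0:ℝ), Real.exp (-(1/(2*(n:ℝ))) * x^2)
      = Real.sqrt (Real.pi/2) * Real.sqrt n := by
  rw [integral_gaussian_Ioi]
  have hn0 : (0:ℝ) < n := by exact_mod_cast hn
  have h1 : Real.pi / (1/(2*(n:ℝ))) = (Real.pi/2) * (4*n) := by field_simp; ring
  rw [h1, Real.sqrt_mul (by positivity), show (4:ℝ)*n = 2^2*n by norm_num,
    Real.sqrt_mul (by positivity), Real.sqrt_sq (by norm_num)]
  ring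

lemma Z_upper (n : ℕ) (hn : 1 ≤ n) :
    sawZ n 1 ≤ 1 + Real.sqrt (Real.pi/2) * Real.sqrt n := by
  have hn0 : (0:ℝ) < n := by exact_mod_cast hn
  have hb : (0:ℝ) < 1/(2*(n:ℝ)) := by positivity
  set g : ℝ → ℝ := fun x => Real.exp (-(1/(2*(n:ℝ))) * x^2) with hg
  have hgk : ∀ k : ℕ, Real.exp (-((k:ℝ)^2 / (2 * n))) = g k := by
    intro k; simp only [hg]; congr 1; ring
  obtain ⟨m, rfl⟩ : ∃ m, n = m + 1 := ⟨n-1, by omega⟩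
  have h1 : sawZ (m+1) 1 ≤ ∑ k ∈ Finset.range (m+1), g k :=
    Finset.sum_le_sum (fun k _ => (weight_le _ k hn).trans_eq (hgk k))
  have h2 : ∑ k ∈ Finset.range (m+1), g k = (∑ i ∈ Finset.range m, g (0 + ((i:ℕ)+1:ℕ))) + g 0 := by
    rw [Finset.sum_range_succ']
    simp
  have h3 : (∑ i ∈ Finset.range m, g (0 + ((i:ℕ)+1:ℕ))) ≤ ∫ x in (0:ℝ)..(0 + (m:ℝ)), g x :=
    AntitoneOn.sum_le_integral (gauss_anti hb)
  have h4 : ∫ x in (0:ℝ)..(0 + (m:ℝ)), g x ≤ Real.sqrt (Real.pi/2) * Real.sqrt ((m+1:ℕ):ℝ) := by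
    rw [zero_add, ← gauss_halfline (m+1) hn]
    exact gauss_int_le hb (by positivity)
  have hg0 : g 0 = 1 := by simp [hg]
  push_cast at h2 h3 h4 ⊢
  linarith


lemma gauss_int_mono {b : ℝ} (hb : 0 < b) {u v : ℝ} (hu : 0 ≤ u) (huv : u ≤ v) :
    ∫ x in (0:ℝ)..u, Real.exp (-b * x^2) ≤ ∫ x in (0:ℝ)..v, Real.exp (-b * x^2) := by
  rw [intervalIntegral.integral_of_le hu, intervalIntegral.integral_of_le (hu.trans huv)]
  apply setIntegral_mono_set ((integrable_exp_neg_mul_sq hb).integrableOn)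
  · exact Filter.Eventually.of_forall (fun x => (Real.exp_pos _).le)
  · exact (Set.Ioc_subset_Ioc_right huv).eventuallyLE

lemma gauss_one : ∫ x in Set.Ioi (0:ℝ), Real.exp (-(1/2:ℝ) * x^2) = Real.sqrt (Real.pi/2) := by
  rw [integral_gaussian_Ioi]
  have h1 : Real.pi / (1/2:ℝ) = (Real.pi/2) * 2^2 := by ring
  rw [h1, Real.sqrt_mul (by positivity), Real.sqrt_sq (by norm_num)]
  ring

lemma gauss_int_le_one {m : ℝ} (hm : 0 ≤ m) :
    ∫ x in (0:ℝ)..m, Real.exp (-(1/2:ℝ) * x^2) ≤ Real.sqrt (Real.pi/2) := by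
  rw [← gauss_one, intervalIntegral.integral_of_le hm]
  apply setIntegral_mono_set ((integrable_exp_neg_mul_sq (by norm_num)).integrableOn)
  · exact Filter.Eventually.of_forall (fun x => (Real.exp_pos _).le)
  · exact (Set.Ioc_subset_Ioi_self).eventuallyLE

lemma sqrt_nat_tendsto : Tendsto (fun n : ℕ => Real.sqrt n) atTop atTop := by
  apply tendsto_atTop_atTop.2
  intro M
  refine ⟨⌈M^2⌉₊ + 1, fun n hn => ?_⟩
  rcases le_or_gt M 0 with h|h
  · exact h.trans (Real.sqrt_nonneg _)
  · have h2 : (M:ℝ)^2 ≤ n := le_trans (Nat.le_ceil _)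
      (by exact_mod_cast Nat.le_of_succ_le hn)
    have := Real.sqrt_le_sqrt h2
    rwa [Real.sqrt_sq h.le] at this

lemma Z_lower {ε : ℝ} (hε : 0 < ε) :
    ∀ᶠ n : ℕ in atTop, (Real.sqrt (Real.pi/2) - ε) * Real.sqrt n ≤ sawZ n 1 := by
  set c := Real.sqrt (Real.pi/2) with hc
  have hc0 : 0 < c := Real.sqrt_pos.2 (by positivity)
  -- choose A
  have htend : Tendsto (fun A : ℝ => ∫ x in (0:ℝ)..A, Real.exp (-(1/2:ℝ) * x^2)) atTop
      (nhds c) := by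
    rw [hc, ← gauss_one]
    exact intervalIntegral_tendsto_integral_Ioi 0
      ((integrable_exp_neg_mul_sq (by norm_num)).integrableOn) tendsto_id
  obtain ⟨A, hA1, hIA⟩ : ∃ A : ℝ, 1 ≤ A ∧
      c - ε/4 ≤ ∫ x in (0:ℝ)..A, Real.exp (-(1/2:ℝ) * x^2) := by
    have h := htend.eventually (eventually_ge_nhds (show c - ε/4 < c by linarith))
    obtain ⟨A, hA⟩ := (h.and (eventually_ge_atTop 1)).exists
    exact ⟨A, hA.2, hA.1⟩
  set I := ∫ x in (0:ℝ)..A, Real.exp (-(1/2:ℝ) * x^2) with hI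
  have hA0 : 0 < A := by linarith
  have hIle : I ≤ c := gauss_int_le_one hA0.le
  have hI0 : 0 ≤ I := intervalIntegral.integral_nonneg hA0.le
    (fun x _ => (Real.exp_pos _).le)
  set ε₂ := ε / (4 * (c + 1)) with hε₂
  have hε₂0 : 0 < ε₂ := by positivity
  -- eventual conditions
  have hsq : Tendsto (fun n : ℕ => Real.sqrt n) atTop atTop := sqrt_nat_tendsto
  filter_upwards [eventually_ge_atTop 1, hsq.eventually_ge_atTop (4*A),
    hsq.eventually_ge_atTop 2, hsq.eventually_ge_atTop ((A/2 + A^3)/ε₂)]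
    with n hn1 hs4A hs2 hsε
  have hn0 : (0:ℝ) < n := by exact_mod_cast hn1
  set s := Real.sqrt (n:ℝ) with hs
  have hs0 : 0 < s := Real.sqrt_pos.2 hn0
  have hsn : s * s = n := Real.mul_self_sqrt hn0.le
  set K := ⌊A * s⌋₊ with hK
  have hAs0 : 0 ≤ A * s := by positivity
  have hKle : (K:ℝ) ≤ A * s := Nat.floor_le hAs0
  have hK1 : A * s ≤ (K:ℝ) + 1 := (Nat.lt_floor_add_one (A*s)).le
  have hK0 : (0:ℝ) ≤ K := Nat.cast_nonneg K
  have hKn4 : (K:ℝ) ≤ (n:ℝ)/4 := by nlinarith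
  have hK1n : K + 1 ≤ n := by
    have h4 : (4:ℝ) ≤ n := by nlinarith
    have : ((K+1:ℕ):ℝ) ≤ (n:ℝ) := by push_cast; nlinarith
    exact_mod_cast this
  set δ := (K:ℝ)/(2*n) + (K:ℝ)^3/(n:ℝ)^2 with hδ
  have hδ0 : 0 ≤ δ := by positivity
  have hδε : δ ≤ ε₂ := by
    have hKle3 : (K:ℝ)^3 ≤ A^3 * s^3 := by
      calc (K:ℝ)^3 ≤ (A*s)^3 := pow_le_pow_left₀ hK0 hKle 3
        _ = A^3 * s^3 := by ring
    have e1 : (K:ℝ)/(2*(n:ℝ)) ≤ A/(2*s) := by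
      rw [div_le_div_iff₀ (by positivity) (by positivity)]
      calc (K:ℝ) * (2*s) ≤ (A*s) * (2*s) :=
            mul_le_mul_of_nonneg_right hKle (by positivity)
        _ = A * (2*(s*s)) := by ring
        _ = A * (2*(n:ℝ)) := by rw [hsn]
    have e2 : (K:ℝ)^3/(n:ℝ)^2 ≤ A^3/s := by
      rw [div_le_div_iff₀ (by positivity) (by positivity)]
      have hn2 : (n:ℝ)^2 = s^4 := by rw [← hsn]; ring
      calc (K:ℝ)^3 * s ≤ (A^3*s^3) * s := mul_le_mul_of_nonneg_right hKle3 hs0.le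
        _ = A^3 * s^4 := by ring
        _ = A^3 * (n:ℝ)^2 := by rw [hn2]
    have e3 : A/(2*s) + A^3/s ≤ ε₂ := by
      rw [div_le_iff₀ hε₂0] at hsε
      have heq : A/(2*s) + A^3/s = (A/2 + A^3)/s := by field_simp
      rw [heq, div_le_iff₀ hs0, mul_comm]
      exact hsε
    rw [hδ]
    linarith
  set b := 1/(2*(n:ℝ)) with hb
  have hbpos : (0:ℝ) < b := by positivity
  set g : ℝ → ℝ := fun x => Real.exp (-b * x^2) with hg
  -- step 2/3
  have step3 : Real.exp (-δ) * ∑ k ∈ Finset.range (K+1), g k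
      ≤ ∑ k ∈ Finset.range (K+1), sawWeight n 1 k := by
    rw [Finset.mul_sum]
    apply Finset.sum_le_sum
    intro k hk
    have hkK : k ≤ K := Nat.lt_succ_iff.1 (Finset.mem_range.1 hk)
    have hkn4 : (k:ℝ) ≤ (n:ℝ)/4 := le_trans (by exact_mod_cast Nat.cast_le.2 hkK) hKn4
    refine le_trans ?_ (weight_ge n k hn1 hkn4)
    rw [hg]
    simp only []
    rw [← Real.exp_add]
    apply Real.exp_le_exp.2
    have hkK' : (k:ℝ) ≤ (K:ℝ) := Nat.cast_le.2 hkK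
    have hk3 : (k:ℝ)^3 ≤ (K:ℝ)^3 := pow_le_pow_left₀ (Nat.cast_nonneg k) hkK' 3
    have p1 : (k:ℝ)/(2*(n:ℝ)) ≤ (K:ℝ)/(2*(n:ℝ)) := by gcongr
    have p2 : (k:ℝ)^3/(n:ℝ)^2 ≤ (K:ℝ)^3/(n:ℝ)^2 := by gcongr
    have pb : -b*(k:ℝ)^2 = -((k:ℝ)^2/(2*(n:ℝ))) := by rw [hb]; ring
    rw [hδ, pb]
    linarith
  have step1 : ∑ k ∈ Finset.range (K+1), sawWeight n 1 k ≤ sawZ n 1 :=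
    Finset.sum_le_sum_of_subset_of_nonneg (Finset.range_subset_range.2 hK1n)
      (fun k _ _ => weight_nonneg n k)
  -- step 4
  have step4 : ∫ x in (0:ℝ)..(0 + ((K+1:ℕ):ℝ)), g x ≤ ∑ i ∈ Finset.range (K+1), g (0 + (i:ℕ)) :=
    AntitoneOn.integral_le_sum (gauss_anti hbpos)
  simp only [zero_add] at step4
  -- step 5
  have step5 : ∫ x in (0:ℝ)..(A*s), g x ≤ ∫ x in (0:ℝ)..(((K+1:ℕ)):ℝ), g x := by
    apply gauss_int_mono hbpos hAs0
    push_cast; linarith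
  -- step 6 : substitution
  have hcomp : ∀ u : ℝ, g (s * u) = Real.exp (-(1/2:ℝ) * u^2) := by
    intro u
    simp only [hg]
    congr 1
    rw [mul_pow]
    rw [hb]
    have : s^2 = n := by rw [sq]; exact hsn
    rw [this]
    field_simp
  have step6 : ∫ x in (0:ℝ)..(A*s), g x = s * I := by
    have h1 : s • ∫ u in (0:ℝ)..A, g (s * u) = ∫ x in (s*0)..(s*A), g x :=
      intervalIntegral.smul_integral_comp_mul_left g s
    rw [mul_zero, mul_comm s A] at h1
    rw [← h1, hI]
    rw [intervalIntegral.integral_congr (fun u _ => hcomp u)]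
    simp [smul_eq_mul]
  -- combine
  have hfinal : c - ε ≤ Real.exp (-δ) * I := by
    have hexp : 1 - δ ≤ Real.exp (-δ) := by linarith [Real.add_one_le_exp (-δ)]
    have h1 : (1-δ)*I ≤ Real.exp (-δ)*I := mul_le_mul_of_nonneg_right hexp hI0
    have h2 : δ*I ≤ δ*c := mul_le_mul_of_nonneg_left hIle hδ0
    have h3 : δ*c ≤ ε₂*c := mul_le_mul_of_nonneg_right hδε hc0.le
    have h4 : ε₂*c ≤ ε/4 := by
      rw [hε₂, div_mul_eq_mul_div, div_le_div_iff₀ (by positivity) (by norm_num)]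
      nlinarith
    nlinarith [h1, h2, h3, h4, hIA]
  calc (c - ε) * s ≤ (Real.exp (-δ) * I) * s :=
        mul_le_mul_of_nonneg_right hfinal hs0.le
    _ = Real.exp (-δ) * (s * I) := by ring
    _ = Real.exp (-δ) * ∫ x in (0:ℝ)..(A*s), g x := by rw [step6]
    _ ≤ Real.exp (-δ) * ∫ x in (0:ℝ)..(((K+1:ℕ)):ℝ), g x :=
        mul_le_mul_of_nonneg_left step5 (Real.exp_pos _).le
    _ ≤ Real.exp (-δ) * ∑ i ∈ Finset.range (K+1), g i :=
        mul_le_mul_of_nonneg_left step4 (Real.exp_pos _).le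
    _ ≤ ∑ k ∈ Finset.range (K+1), sawWeight n 1 k := step3
    _ ≤ sawZ n 1 := step1


lemma Z_tendsto : Tendsto (fun n : ℕ => sawZ n 1 / Real.sqrt n) atTop
    (nhds (Real.sqrt (Real.pi/2))) := by
  set c := Real.sqrt (Real.pi/2) with hc
  rw [Metric.tendsto_atTop]
  intro ε hε
  have h1 := Z_lower (show 0 < ε/2 by linarith)
  have h2 := sqrt_nat_tendsto.eventually_gt_atTop (2/ε)
  have h3 : ∀ᶠ n : ℕ in atTop, 1 ≤ n := eventually_ge_atTop 1
  obtain ⟨N, hN⟩ := eventually_atTop.1 ((h1.and (h2.and h3)))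
  refine ⟨N, fun n hn => ?_⟩
  obtain ⟨hlow, hs2ε, hn1⟩ := hN n hn
  have hn0 : (0:ℝ) < n := by exact_mod_cast hn1
  have hs0 : 0 < Real.sqrt n := Real.sqrt_pos.2 hn0
  set s := Real.sqrt (n:ℝ) with hs
  have hup := Z_upper n hn1
  have hl : c - ε/2 ≤ sawZ n 1 / s := (le_div_iff₀ hs0).2 hlow
  have hu : sawZ n 1 / s ≤ 1/s + c := by
    rw [div_le_iff₀ hs0]
    rw [← hs, ← hc] at hup
    have hss : (1/s)*s = 1 := by field_simp
    nlinarith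
  have h1s : 1/s < ε/2 := by
    rw [div_lt_iff₀ hs0]
    rw [div_lt_iff₀ hε] at hs2ε
    nlinarith
  rw [Real.dist_eq, abs_lt]
  constructor <;> nlinarith

theorem mean_critical :
    (fun n : ℕ => sawMean n 1) ~[atTop]
      (fun n : ℕ => Real.sqrt (2 / Real.pi) * Real.sqrt n) := by
  set c := Real.sqrt (Real.pi/2) with hc
  have hc0 : 0 < c := Real.sqrt_pos.2 (by positivity)
  have hsqinv : Real.sqrt (2/Real.pi) = 1/c := by
    have hmul : c * Real.sqrt (2/Real.pi) = 1 := by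
      rw [hc, ← Real.sqrt_mul (by positivity)]
      rw [show (Real.pi/2) * (2/Real.pi) = 1 by field_simp]
      exact Real.sqrt_one
    rw [eq_div_iff hc0.ne']
    linarith [hmul]
  apply Asymptotics.isEquivalent_of_tendsto_one
  · have t1 : Tendsto (fun n : ℕ => c / (sawZ n 1 / Real.sqrt n)) atTop (nhds (c/c)) :=
      Tendsto.div tendsto_const_nhds Z_tendsto hc0.ne'
    rw [div_self hc0.ne'] at t1
    have t2 : Tendsto (fun n : ℕ => c / Real.sqrt n) atTop (nhds 0) :=
      Tendsto.div_atTop tendsto_const_nhds sqrt_nat_tendsto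
    have t := t1.sub t2
    rw [sub_zero] at t
    apply t.congr'
    filter_upwards [eventually_ge_atTop 1] with n hn1
    have hn0 : (0:ℝ) < n := by exact_mod_cast hn1
    have hs0 : 0 < Real.sqrt n := Real.sqrt_pos.2 hn0
    have hZ1 : 1 ≤ sawZ n 1 := Z_ge_one n hn1
    have hZ0 : sawZ n 1 ≠ 0 := by linarith
    have hsn : Real.sqrt n * Real.sqrt n = n := Real.mul_self_sqrt hn0.le
    simp only [Pi.div_apply]
    rw [mean_eq n hn1, hsqinv]
    field_simp
    rw [sq, hsn]

end SawProof
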